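/- Let p ≥ 2, let f : ℝ^d → ℝ be differentiable and L-smooth w.r.t. ‖·‖_p, let y ∈ ℝ^d, and let x⁺ be a minimizer over x ∈ ℝ^d of the map x ↦ ⟨∇f(y), x − y⟩ + L‖x − y‖_p². Then ‖∇f(x⁺)‖_{p*} ≤ 3L‖x⁺ − y‖_p; consequently L‖x⁺ − y‖_p² ≥ (1/(9L))‖∇f(x⁺)‖_{p*}². -/

import Mathlib

open scoped BigOperators
open scoped InnerProductSpace

/-- The `ℓ_p` "norm" on `ℝ^d` for a real exponent `p`. -/
noncomputable def pnorm (p : ℝ) {d : ℕ} (x : EuclideanSpace ℝ (Fin d)) : ℝ :=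
  (∑ i, |x i| ^ p) ^ (1 / p)

/-- The dual exponent `p* = p/(p-1)`, so that `1/p + 1/p* = 1`. -/
noncomputable def dualExp (p : ℝ) : ℝ := p / (p - 1)

lemma pnorm_nonneg (p : ℝ) {d : ℕ} (x : EuclideanSpace ℝ (Fin d)) : 0 ≤ pnorm p x :=
  Real.rpow_nonneg (Finset.sum_nonneg fun _ _ => Real.rpow_nonneg (abs_nonneg _) _) _

lemma pnorm_zero {p : ℝ} (hp : 0 < p) {d : ℕ} : pnorm p (0 : EuclideanSpace ℝ (Fin d)) = 0 := by
  unfold pnorm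
  simp [Real.zero_rpow hp.ne', Real.zero_rpow (inv_ne_zero hp.ne')]

lemma pnorm_neg (p : ℝ) {d : ℕ} (x : EuclideanSpace ℝ (Fin d)) : pnorm p (-x) = pnorm p x := by
  unfold pnorm
  congr 1
  exact Finset.sum_congr rfl fun i _ => by simp

lemma pnorm_smul {p : ℝ} (hp : 0 < p) {d : ℕ} (c : ℝ) (x : EuclideanSpace ℝ (Fin d)) :
    pnorm p (c • x) = |c| * pnorm p x := by
  unfold pnorm
  have h1 : ∀ i, |(c • x) i| ^ p = |c| ^ p * |x i| ^ p := by
    intro i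
    rw [PiLp.smul_apply, smul_eq_mul, abs_mul, Real.mul_rpow (abs_nonneg _) (abs_nonneg _)]
  rw [Finset.sum_congr rfl fun i _ => h1 i, ← Finset.mul_sum,
    Real.mul_rpow (by positivity) (Finset.sum_nonneg fun _ _ => Real.rpow_nonneg (abs_nonneg _) _),
    ← Real.rpow_mul (abs_nonneg c), mul_one_div_cancel hp.ne', Real.rpow_one]

lemma pnorm_inner_le {p q : ℝ} (hqp : q.HolderConjugate p) {d : ℕ}
    (u v : EuclideanSpace ℝ (Fin d)) : ⟪u, v⟫_ℝ ≤ pnorm q u * pnorm p v := by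
  have := Real.inner_le_Lp_mul_Lq (Finset.univ) (fun i => u i) (fun i => v i) hqp
  simpa [pnorm, PiLp.inner_apply, RCLike.inner_apply, mul_comm] using this

lemma exists_dual_vec {p q : ℝ} (hpq : p.HolderConjugate q) {d : ℕ}
    (u : EuclideanSpace ℝ (Fin d)) (hu : u ≠ 0) :
    ∃ v : EuclideanSpace ℝ (Fin d), pnorm p v = 1 ∧ ⟪u, v⟫_ℝ = pnorm q u := by
  have hq1 : 1 < q := hpq.symm.lt
  have hq0 : 0 < q := hpq.symm.pos
  have hqm1 : 0 < q - 1 := by linarith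
  set S : ℝ := ∑ i, |u i| ^ q with hS
  have hSpos : 0 < S := by
    obtain ⟨i, hi⟩ : ∃ i, u i ≠ 0 := by
      by_contra h
      push_neg at h
      exact hu (by ext i; exact h i)
    apply Finset.sum_pos' (fun j _ => Real.rpow_nonneg (abs_nonneg _) _)
    exact ⟨i, Finset.mem_univ i, Real.rpow_pos_of_pos (abs_pos.mpr hi) q⟩
  set w : EuclideanSpace ℝ (Fin d) := WithLp.toLp 2 fun i => Real.sign (u i) * |u i| ^ (q - 1) with hw
  have hmul : ∀ i, u i * w i = |u i| ^ q := by
    intro i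
    by_cases hui : u i = 0
    · simp [hw, hui, Real.zero_rpow hq0.ne', Real.zero_rpow hqm1.ne']
    · have habs : 0 < |u i| := abs_pos.mpr hui
      have h1 : u i * Real.sign (u i) = |u i| := by
        rcases lt_or_gt_of_ne hui with h | h
        · rw [Real.sign_of_neg h, abs_of_neg h]; ring
        · rw [Real.sign_of_pos h, abs_of_pos h]; ring
      calc u i * (Real.sign (u i) * |u i| ^ (q - 1))
          = (u i * Real.sign (u i)) * |u i| ^ (q - 1) := by ring
        _ = |u i| ^ (1 : ℝ) * |u i| ^ (q - 1) := by rw [h1, Real.rpow_one]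
        _ = |u i| ^ q := by rw [← Real.rpow_add habs]; ring_nf
  have habsw : ∀ i, |w i| ^ p = |u i| ^ q := by
    intro i
    have h1 : |w i| = |u i| ^ (q - 1) := by
      by_cases hui : u i = 0
      · simp [hw, hui, Real.zero_rpow hqm1.ne']
      · rw [hw]
        simp only [PiLp.toLp_apply]
        rw [abs_mul, abs_of_nonneg (Real.rpow_nonneg (abs_nonneg _) _)]
        rcases lt_or_gt_of_ne hui with h | h
        · rw [Real.sign_of_neg h]; norm_num
        · rw [Real.sign_of_pos h]; norm_num
    rw [h1, ← Real.rpow_mul (abs_nonneg _)]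
    congr 1
    have := hpq.symm.sub_one_mul_conj
    linarith
  have hpw : pnorm p w = S ^ (1 / p) := by
    unfold pnorm
    rw [Finset.sum_congr rfl fun i _ => habsw i]
  have hinnw : ⟪u, w⟫_ℝ = S := by
    simp only [PiLp.inner_apply, RCLike.inner_apply, conj_trivial]
    exact Finset.sum_congr rfl fun i _ => (mul_comm _ _).trans (hmul i)
  refine ⟨(S ^ (1 / p))⁻¹ • w, ?_, ?_⟩
  · rw [pnorm_smul hpq.pos, hpw, abs_of_pos (by positivity), inv_mul_cancel₀ (by positivity)]
  · rw [real_inner_smul_right, hinnw]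
    have h0 : pnorm q u = S ^ (1 / q) := rfl
    have hsum : S ^ ((1:ℝ)/p) * S ^ ((1:ℝ)/q) = S := by
      rw [← Real.rpow_add hSpos, one_div, one_div, hpq.inv_add_inv_eq_one, Real.rpow_one]
    rw [h0, inv_mul_eq_iff_eq_mul₀ (by positivity)]
    exact hsum.symm

theorem stmt2 {d : ℕ} (p L : ℝ) (hp : 2 ≤ p) (hL : 0 < L)
    (f : EuclideanSpace ℝ (Fin d) → ℝ) (hf : Differentiable ℝ f)
    (hsmooth : ∀ x y : EuclideanSpace ℝ (Fin d),
      pnorm (dualExp p) (gradient f y - gradient f x) ≤ L * pnorm p (y - x))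
    (y xp : EuclideanSpace ℝ (Fin d))
    (hxp : ∀ x : EuclideanSpace ℝ (Fin d),
      ⟪gradient f y, xp - y⟫_ℝ + L * pnorm p (xp - y) ^ 2 ≤
      ⟪gradient f y, x - y⟫_ℝ + L * pnorm p (x - y) ^ 2) :
    pnorm (dualExp p) (gradient f xp) ≤ 3 * L * pnorm p (xp - y) ∧
    L * pnorm p (xp - y) ^ 2 ≥ (1 / (9 * L)) * pnorm (dualExp p) (gradient f xp) ^ 2 := by
  have hp1 : 1 < p := by linarith
  have hp0 : 0 < p := by linarith
  have hpq : p.HolderConjugate (dualExp p) := Real.HolderConjugate.conjExponent hp1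
  set q := dualExp p with hqdef
  set g := gradient f y with hg
  set u := gradient f xp with hu
  set r := pnorm p (xp - y) with hr
  set G := pnorm q g with hG
  have hr0 : 0 ≤ r := pnorm_nonneg _ _
  have hG0 : 0 ≤ G := pnorm_nonneg _ _
  -- minimality at x = y
  have h0 : ⟪g, xp - y⟫_ℝ + L * r ^ 2 ≤ 0 := by
    have := hxp y
    simpa [sub_self, pnorm_zero hp0] using this
  -- Hölder lower bound
  have hH : -(G * r) ≤ ⟪g, xp - y⟫_ℝ := by
    have h1 : ⟪g, -(xp - y)⟫_ℝ ≤ G * pnorm p (-(xp - y)) := pnorm_inner_le hpq.symm g _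
    rw [inner_neg_right, pnorm_neg] at h1
    linarith
  -- key: G = 2 L r
  have hkey : G = 2 * L * r := by
    by_cases hgz : g = 0
    · have hGz : G = 0 := by rw [hG, hgz, pnorm_zero hpq.symm.pos]
      have hle : L * r ^ 2 ≤ 0 := by
        rw [hgz] at h0; simpa using h0
      have hrz : r = 0 := by
        by_contra h
        have hrpos : 0 < r := lt_of_le_of_ne hr0 (Ne.symm h)
        nlinarith [mul_pos hL (pow_pos hrpos 2)]
      rw [hGz, hrz]; ring
    · obtain ⟨v, hv1, hv2⟩ := exists_dual_vec hpq g hgz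
      set c := G / (2 * L) with hc
      have hc0 : 0 ≤ c := by positivity
      have h2 := hxp (y - c • v)
      have h3 : y - c • v - y = -(c • v) := by abel
      rw [h3, pnorm_neg, pnorm_smul hp0, hv1, inner_neg_right, real_inner_smul_right, hv2,
        abs_of_nonneg hc0, mul_one, ← hG] at h2
      -- h2 : ⟪g, xp - y⟫ + L r² ≤ -(c * G) + L * c²
      have h4 : L * r ^ 2 - G * r ≤ -(c * G) + L * c ^ 2 := by linarith
      have hch : 2 * L * c = G := by rw [hc]; field_simp
      have h5 : (r - c) ^ 2 ≤ 0 := by nlinarith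
      have h6 : r = c := by
        have h7 : (r - c) ^ 2 = 0 := le_antisymm h5 (sq_nonneg _)
        have := pow_eq_zero_iff (n := 2) (by norm_num) |>.mp h7
        linarith [sub_eq_zero.mp this]
      rw [h6, ← hch]
  -- first part
  have hfirst : pnorm q u ≤ 3 * L * r := by
    by_cases huz : u = 0
    · rw [huz, pnorm_zero hpq.symm.pos]; positivity
    · obtain ⟨v, hv1, hv2⟩ := exists_dual_vec hpq u huz
      have hsm : pnorm q (u - g) ≤ L * r := by
        have h8 := hsmooth xp y
        rw [← hg, ← hu] at h8
        have he : pnorm q (g - u) = pnorm q (u - g) := by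
          rw [← pnorm_neg q (g - u), neg_sub]
        have he2 : pnorm p (y - xp) = r := by
          rw [hr, ← pnorm_neg p (y - xp), neg_sub]
        rw [he, he2] at h8
        exact h8
      have hA : ⟪u - g, v⟫_ℝ ≤ pnorm q (u - g) := by
        have := pnorm_inner_le hpq.symm (u - g) v
        rwa [hv1, mul_one] at this
      have hB : ⟪g, v⟫_ℝ ≤ G := by
        have := pnorm_inner_le hpq.symm g v
        rwa [hv1, mul_one] at this
      have hsplit : ⟪u, v⟫_ℝ = ⟪u - g, v⟫_ℝ + ⟪g, v⟫_ℝ := by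
        rw [← inner_add_left, sub_add_cancel]
      rw [← hv2, hsplit]
      linarith
  refine ⟨hfirst, ?_⟩
  have hN0 : 0 ≤ pnorm q u := pnorm_nonneg _ _
  rw [ge_iff_le, div_mul_eq_mul_div, div_le_iff₀ (by positivity : (0:ℝ) < 9 * L)]
  nlinarith [mul_self_le_mul_self hN0 hfirst]
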